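/- In the free product A * B of two copies of the Klein four-group, the elements x = a₁b₁ and y = a₂b₂ generate a free subgroup of rank 2. -/

import Mathlib

open Monoid CoprodI Word

/-- The Klein four-group `Z/2 × Z/2`, written multiplicatively. -/
abbrev Klein : Type := Multiplicative (ZMod 2 × ZMod 2)

/-- First generator `c₁` of the Klein four-group. -/
def c₁ : Klein := Multiplicative.ofAdd (1, 0)

/-- Second generator `c₂` of the Klein four-group. -/
def c₂ : Klein := Multiplicative.ofAdd (0, 1)

/-- The homomorphism `φ : A * B → C` (with `A = B = C = Klein`) determined by
`φ(a₁) = φ(b₁) = c₁` and `φ(a₂) = φ(b₂) = c₂`. -/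
def phi : Coprod Klein Klein →* Klein :=
  Coprod.lift (MonoidHom.id Klein) (MonoidHom.id Klein)

def a₁ : Coprod Klein Klein := Coprod.inl c₁
def a₂ : Coprod Klein Klein := Coprod.inl c₂
def b₁ : Coprod Klein Klein := Coprod.inr c₁
def b₂ : Coprod Klein Klein := Coprod.inr c₂



abbrev Hf : Bool → Type := fun _ => Klein

noncomputable example : MulAction (CoprodI Hf) (Word Hf) := by infer_instance

def cc : Fin 2 → Klein := ![c₁, c₂]

example : Function.Injective cc := by decide
example : ∀ i : Fin 2, cc i ≠ 1 := by decide
example : ∀ (i : Fin 2) (m : Klein), cc i * m = 1 → m = cc i := by decide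
example : ∀ i : Fin 2, (cc i)⁻¹ = cc i := by decide

-- L1
theorem head1 {ι} [DecidableEq ι] {M : ι → Type*} [∀ i, Monoid (M i)] [∀ i, DecidableEq (M i)]
    {i : ι} {m : M i} (hm : m ≠ 1) {w : Word M} (hw : w.fstIdx ≠ some i) :
    (CoprodI.of m • w).toList.head? = some ⟨i, m⟩ := by
  rw [of_smul_def, equivPair_eq_of_fstIdx_ne hw]
  simp [rcons, cons, hm]

-- L2
theorem head2 {ι} [DecidableEq ι] {G : ι → Type*} [∀ i, Group (G i)] [∀ i, DecidableEq (G i)]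
    {i : ι} {m m' : G i} (hmm : m * m' ≠ 1) {w : Word G}
    (hw : w.toList.head? = some ⟨i, m'⟩) :
    (CoprodI.of m • w).toList.head? = some ⟨i, m * m'⟩ := by
  have hne : w.toList ≠ [] := by intro h; rw [h] at hw; simp at hw
  have h1 : w.toList.head hne = ⟨i, m'⟩ := by
    rwa [List.head?_eq_head hne, Option.some_inj] at hw
  have hhead : (equivPair i w).head = m' := by
    rw [equivPair_head, dif_pos ⟨hne, by rw [h1]⟩]
    have h2 : HEq (w.toList.head hne).snd m' := by rw [h1]
    exact eq_of_heq ((eqRec_heq _ _).trans h2)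
  have htail := equivPair_head_smul_equivPair_tail (i := i) w
  rw [hhead] at htail
  have : CoprodI.of m • w = CoprodI.of (m * m') • (equivPair i w).tail := by
    rw [map_mul, mul_smul, htail]
  rw [this]
  exact head1 hmm (equivPair i w).fstIdx_ne

namespace PingPongAux

open Pointwise

noncomputable instance : MulAction (CoprodI Hf) (Word Hf) := by infer_instance

theorem ccne1 : ∀ i : Fin 2, cc i ≠ 1 := by decide
theorem ccmul : ∀ (i : Fin 2) (m : Klein), cc i * m = 1 → m = cc i := by decide
theorem ccinj : Function.Injective cc := by decide
theorem ccinv : ∀ i : Fin 2, (cc i)⁻¹ = cc i := by decide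

def g : Fin 2 → CoprodI Hf :=
  fun i => CoprodI.of (M := Hf) (i := true) (cc i) * CoprodI.of (M := Hf) (i := false) (cc i)

def X : Fin 2 → Set (Word Hf) := fun i => {w | w.toList.head? = some ⟨true, cc i⟩}
def Y : Fin 2 → Set (Word Hf) := fun i => {w | w.toList.head? = some ⟨false, cc i⟩}

theorem fstIdx_smul (c : Bool) (i : Fin 2) (w : Word Hf)
    (hw : w.toList.head? ≠ some ⟨c, cc i⟩) :
    (CoprodI.of (M := Hf) (i := c) (cc i) • w).fstIdx = some c := by
  rcases hL : w.toList with _ | ⟨⟨d, m⟩, t⟩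
  · have hf : w.fstIdx ≠ some c := by simp [Word.fstIdx, hL]
    have := head1 (ccne1 i) hf
    simp [Word.fstIdx, this]
  · by_cases hd : d = c
    · subst hd
      have hm' : w.toList.head? = some ⟨d, m⟩ := by rw [hL]; rfl
      have hmne : m ≠ cc i := by rintro rfl; exact hw hm'
      have h1 : cc i * m ≠ 1 := fun h => hmne (ccmul i m h)
      have := head2 h1 hm'
      simp [Word.fstIdx, this]
    · have hf : w.fstIdx ≠ some c := by simp [Word.fstIdx, hL, hd]
      have := head1 (ccne1 i) hf
      simp [Word.fstIdx, this]

theorem key (i : Fin 2) (b c : Bool) (hbc : b ≠ c) (w : Word Hf)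
    (hw : w.toList.head? ≠ some ⟨c, cc i⟩) :
    ((CoprodI.of (M := Hf) (i := b) (cc i) * CoprodI.of (M := Hf) (i := c) (cc i)) • w).toList.head?
      = some ⟨b, cc i⟩ := by
  rw [mul_smul]
  exact head1 (ccne1 i)
    (by rw [fstIdx_smul c i w hw]; simpa using Ne.symm hbc)

theorem hXnonempty : ∀ i, (X i).Nonempty := by
  intro i
  refine ⟨CoprodI.of (M := Hf) (i := true) (cc i) • Word.empty, ?_⟩
  exact head1 (ccne1 i) (by simp [Word.fstIdx, Word.empty])

theorem hXdisj : Pairwise (Function.onFun Disjoint X) := by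
  intro i j hij
  rw [Function.onFun, Set.disjoint_left]
  intro w hwi hwj
  rw [X, Set.mem_setOf_eq] at hwi hwj
  rw [hwi] at hwj
  simp only [Option.some_inj, Sigma.ext_iff, heq_eq_eq, true_and] at hwj
  exact hij (ccinj hwj)

theorem hYdisj : Pairwise (Function.onFun Disjoint Y) := by
  intro i j hij
  rw [Function.onFun, Set.disjoint_left]
  intro w hwi hwj
  rw [Y, Set.mem_setOf_eq] at hwi hwj
  rw [hwi] at hwj
  simp only [Option.some_inj, Sigma.ext_iff, heq_eq_eq, true_and] at hwj
  exact hij (ccinj hwj)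

theorem hXYdisj : ∀ i j, Disjoint (X i) (Y j) := by
  intro i j
  rw [Set.disjoint_left]
  intro w hwi hwj
  rw [X, Set.mem_setOf_eq] at hwi
  rw [Y, Set.mem_setOf_eq] at hwj
  rw [hwi] at hwj
  simp [Sigma.ext_iff] at hwj

theorem hX : ∀ i, g i • (Y i)ᶜ ⊆ X i := by
  intro i x hx
  obtain ⟨w, hw, rfl⟩ := hx
  exact key i true false (by simp) w hw

theorem hY : ∀ i, g⁻¹ i • (X i)ᶜ ⊆ Y i := by
  intro i x hx
  obtain ⟨w, hw, rfl⟩ := hx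
  have hginv : g⁻¹ i = CoprodI.of (M := Hf) (i := false) (cc i) *
      CoprodI.of (M := Hf) (i := true) (cc i) := by
    show (g i)⁻¹ = _
    rw [g, mul_inv_rev, ← map_inv, ← map_inv, ccinv i]
  rw [hginv]
  exact key i false true (by simp) w hw

theorem ginj : Function.Injective (FreeGroup.lift g) :=
  FreeGroup.injective_lift_of_ping_pong g X Y hXnonempty hXdisj hYdisj hXYdisj hX hY

end PingPongAux

noncomputable def psi : Coprod Klein Klein →* CoprodI Hf :=
  Coprod.lift (CoprodI.of (M := Hf) (i := true)) (CoprodI.of (M := Hf) (i := false))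

/-- In the free product of two Klein four-groups, the elements `x = a₁b₁` and
`y = a₂b₂` generate a free subgroup of rank 2: the homomorphism from the free
group on two generators sending them to `x, y` is injective, and its range is
the subgroup generated by `x` and `y`. -/
theorem x_y_generate_free_rank_two :
    Function.Injective
      (FreeGroup.lift (![a₁ * b₁, a₂ * b₂] : Fin 2 → Coprod Klein Klein)) ∧
    (FreeGroup.lift (![a₁ * b₁, a₂ * b₂] : Fin 2 → Coprod Klein Klein)).range
      = Subgroup.closure {a₁ * b₁, a₂ * b₂} := by
  constructor
  · have hcomp : psi.comp (FreeGroup.lift (![a₁ * b₁, a₂ * b₂] : Fin 2 → Coprod Klein Klein))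
        = FreeGroup.lift PingPongAux.g := by
      ext z
      fin_cases z <;>
        simp [psi, PingPongAux.g, cc, a₁, a₂, b₁, b₂, Coprod.lift_apply_inl, Coprod.lift_apply_inr]
    have h2 : Function.Injective
        (psi.comp (FreeGroup.lift (![a₁ * b₁, a₂ * b₂] : Fin 2 → Coprod Klein Klein))) := by
      rw [hcomp]; exact PingPongAux.ginj
    rw [MonoidHom.coe_comp] at h2
    exact h2.of_comp
  · rw [FreeGroup.range_lift_eq_closure]
    congr 1
    ext z
    constructor
    · rintro ⟨i, rfl⟩
      fin_cases i <;> simp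
    · rintro (rfl | rfl)
      · exact ⟨0, rfl⟩
      · exact ⟨1, rfl⟩
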